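/- Let r ∈ ℕ⁺, δ = 2^{−r}, and define T : ℝ → ℝ by T(x) = σ(x/δ + 1) − σ(x/δ), where σ is ReLU. Then for any θ₁,…,θ_r ∈ {0,1} and each i ∈ {1,…,r}, letting β_i = ∑_{j=i}^{r} θ_j 2^{−(j−i+1)} (the binary number 0.θ_i…θ_r), one has T(β_i − 1/2) = θ_i. -/

import Mathlib

lemma geom_aux (i r : ℕ) (h : i ≤ r) :
    ∑ j ∈ Finset.Ioc i r, ((1:ℝ)/2) ^ (j - i + 1) = 1/2 - (1/2)^(r - i + 1) := by
  induction r with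
  | zero =>
    interval_cases i
    norm_num
  | succ n ih =>
    rcases Nat.lt_or_ge i (n+1) with h1 | h2
    · have hin : i ≤ n := Nat.lt_succ_iff.mp h1
      rw [Finset.sum_Ioc_succ_top hin, ih hin]
      have e1 : n + 1 - i = (n - i) + 1 := by omega
      rw [e1]
      ring
    · have : i = n + 1 := le_antisymm h h2
      subst this
      norm_num

theorem stmt_11 (r : ℕ) (hr : 0 < r) (θ : ℕ → ℝ)
    (hθ : ∀ j, 1 ≤ j → j ≤ r → θ j = 0 ∨ θ j = 1) :
    ∀ i, 1 ≤ i → i ≤ r →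
      (let δ : ℝ := 1 / 2 ^ r
       let T : ℝ → ℝ := fun x => max 0 (x / δ + 1) - max 0 (x / δ)
       let β : ℝ := ∑ j ∈ Finset.Icc i r, θ j / 2 ^ (j - i + 1)
       T (β - 1/2) = θ i) := by
  intro i hi1 hir
  simp only
  have hmem : i ∈ Finset.Icc i r := Finset.mem_Icc.mpr ⟨le_refl i, hir⟩
  set R : ℝ := ∑ j ∈ Finset.Ioc i r, θ j / 2 ^ (j - i + 1) with hRdef
  have hsplit : ∑ j ∈ Finset.Icc i r, θ j / 2 ^ (j - i + 1) = θ i / 2 + R := by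
    rw [← Finset.add_sum_erase _ _ hmem, Finset.Icc_erase_left]
    norm_num
    rfl
  have hR0 : 0 ≤ R := by
    apply Finset.sum_nonneg
    intro j hj
    rw [Finset.mem_Ioc] at hj
    rcases hθ j (by omega) hj.2 with h | h <;> rw [h] <;> positivity
  have hRle : R ≤ 1/2 - (1/2)^(r - i + 1) := by
    rw [← geom_aux i r hir]
    apply Finset.sum_le_sum
    intro j hj
    rw [Finset.mem_Ioc] at hj
    rw [one_div_pow]
    rcases hθ j (by omega) hj.2 with h | h
    · rw [h]; simp
    · rw [h]
  have hpow : ((1:ℝ)/2)^(r - i + 1) * 2^r = 2^(i-1) := by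
    have h1 : (2:ℝ)^(i-1) * 2^(r-i+1) = 2^r := by
      rw [← pow_add]; congr 1; omega
    rw [one_div_pow, div_mul_eq_mul_div, one_mul, div_eq_iff (by positivity), h1]
  have hdiv : ∀ x : ℝ, x / ((1:ℝ) / 2^r) = x * 2^r := fun x => by rw [one_div, div_eq_mul_inv, inv_inv]
  rcases hθ i hi1 hir with h | h
  · rw [hsplit, h, hdiv]
    have hy : (0 / 2 + R - 1/2) * 2^r ≤ -1 := by
      have h2 : (0 / 2 + R - 1/2) ≤ -((1/2)^(r-i+1)) := by linarith
      have h3 : (0 / 2 + R - 1/2) * 2^r ≤ -((1/2)^(r-i+1)) * 2^r :=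
        mul_le_mul_of_nonneg_right h2 (by positivity)
      have h4 : ((1:ℝ)/2)^(r-i+1) * 2^r = 2^(i-1) := hpow
      have h5 : (1:ℝ) ≤ 2^(i-1) := one_le_pow₀ (by norm_num)
      nlinarith
    rw [max_eq_left (by linarith), max_eq_left (by linarith)]
    norm_num
  · rw [hsplit, h, hdiv]
    have hy : 0 ≤ (1 / 2 + R - 1/2) * 2^r := by
      have he : (1 / 2 + R - 1/2 : ℝ) = R := by ring
      rw [he]; positivity
    rw [max_eq_right (by linarith), max_eq_right hy]
    ring
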